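/- Let R be a ring and M a left R-module. Then M is virtually semisimple and quasi-projective if and only if M is epi-retractable and every submodule of M is M-projective. -/

import Mathlib

universe u v w

/-- A left `R`-module `M` is *virtually semisimple* if every submodule of `M` is
isomorphic, as an `R`-module, to a direct summand of `M`. -/
def IsVirtuallySemisimple (R : Type u) [Ring R] (M : Type v) [AddCommGroup M] [Module R M] :
    Prop :=
  ∀ N : Submodule R M, ∃ K : Submodule R M, (∃ K' : Submodule R M, IsCompl K K') ∧
    Nonempty (N ≃ₗ[R] K)

/-- A module is *completely virtually semisimple* if every submodule is virtually semisimple. -/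
def IsCompletelyVirtuallySemisimple (R : Type u) [Ring R] (M : Type v) [AddCommGroup M]
    [Module R M] : Prop :=
  ∀ N : Submodule R M, IsVirtuallySemisimple R N


/-- `P` is `M`-projective: every map from `P` to a quotient of `M` lifts to `M`. -/
def IsRelativelyProjective (R : Type u) [Ring R] (M : Type v) [AddCommGroup M] [Module R M]
    (P : Type w) [AddCommGroup P] [Module R P] : Prop :=
  ∀ (X : Type v) [AddCommGroup X] [Module R X] (g : M →ₗ[R] X) (f : P →ₗ[R] X),
    Function.Surjective g → ∃ h : P →ₗ[R] M, g ∘ₗ h = f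

/-- `M` is epi-retractable: for every submodule `N` of `M` there is a surjection `M → N`. -/
def IsEpiRetractable (R : Type u) [Ring R] (M : Type v) [AddCommGroup M] [Module R M] : Prop :=
  ∀ N : Submodule R M, ∃ f : M →ₗ[R] N, Function.Surjective f

/-- `M` is virtually semisimple and quasi-projective iff `M` is epi-retractable and every
submodule of `M` is `M`-projective. -/
theorem stmt_2 (R : Type u) [Ring R] (M : Type v) [AddCommGroup M] [Module R M] :
    (IsVirtuallySemisimple R M ∧ IsRelativelyProjective R M M) ↔
      (IsEpiRetractable R M ∧ ∀ N : Submodule R M, IsRelativelyProjective R M N) := by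
  constructor
  · rintro ⟨hvss, hqp⟩
    constructor
    · intro N
      obtain ⟨K, ⟨K', hc⟩, ⟨e⟩⟩ := hvss N
      refine ⟨(e.symm : K →ₗ[R] N) ∘ₗ K.projectionOnto K' hc, ?_⟩
      intro n
      refine ⟨(e n : M), ?_⟩
      simp [Submodule.projectionOnto_apply_left]
    · intro N X _ _ g f hg
      obtain ⟨K, ⟨K', hc⟩, ⟨e⟩⟩ := hvss N
      obtain ⟨h, hh⟩ := hqp X g
        (f ∘ₗ (e.symm : K →ₗ[R] N) ∘ₗ K.projectionOnto K' hc) hg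
      refine ⟨h ∘ₗ K.subtype ∘ₗ (e : N →ₗ[R] K), ?_⟩
      ext n
      have := LinearMap.congr_fun hh ((e n : M))
      simpa [Submodule.projectionOnto_apply_left] using this
  · rintro ⟨her, hp⟩
    constructor
    · intro N
      obtain ⟨f, hf⟩ := her N
      obtain ⟨h, hh⟩ := hp N N f LinearMap.id hf
      have hinj : Function.Injective h := by
        intro a b hab
        have := LinearMap.congr_fun hh a
        have hb := LinearMap.congr_fun hh b
        simp only [LinearMap.comp_apply, LinearMap.id_apply] at this hb
        rw [← this, ← hb, hab]
      refine ⟨LinearMap.range h, ⟨LinearMap.ker f, ?_⟩,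
        ⟨LinearEquiv.ofInjective h hinj⟩⟩
      apply IsCompl.of_eq
      · apply eq_bot_iff.mpr
        rintro x ⟨⟨n, rfl⟩, hxk⟩
        have hn : f (h n) = n := LinearMap.congr_fun hh n
        have hn0 : n = 0 := by rw [← hn]; exact hxk
        simp [hn0]
      · apply eq_top_iff.mpr
        intro x _
        have hfx : f (h (f x)) = f x := LinearMap.congr_fun hh (f x)
        have hxk : x - h (f x) ∈ LinearMap.ker f := by
          simp [LinearMap.mem_ker, hfx]
        exact Submodule.mem_sup.mpr ⟨h (f x), ⟨f x, rfl⟩, x - h (f x), hxk, by abel⟩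
    · intro X _ _ g f hg
      obtain ⟨h, hh⟩ := hp ⊤ X g (f ∘ₗ (Submodule.topEquiv (R := R) (M := M)).toLinearMap) hg
      refine ⟨h ∘ₗ (Submodule.topEquiv (R := R) (M := M)).symm.toLinearMap, ?_⟩
      ext m
      have := LinearMap.congr_fun hh (Submodule.topEquiv.symm m)
      simpa using this
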